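/- Let L ≥ 0, let u : [0,∞) → ℝ, and fix t > 0. For 0 < σ ≤ T ≤ t define Q(t, T, σ) = u(t − σ) − u(t) + ((u(t) − u(t − T))/T)·σ. Let μ ∈ (0, t] and suppose |Q(t, T, σ)| ≤ L·σ·(T − σ)/2 holds for all T ∈ (0, μ] and all σ ∈ [0, T]. Then the one-sided limit β = lim as T → 0⁺ of (u(t) − u(t − T))/T exists (as a finite real number). -/

import Mathlib

open Set Filter Topology

/-- `f ∈ F_L`: `f : [0,∞) → ℝ` is differentiable with derivative `f'`
that is Lipschitz continuous with constant `L` on `[0,∞)`. -/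
def IsFL (L : ℝ) (f f' : ℝ → ℝ) : Prop :=
  (∀ t ∈ Set.Ici (0:ℝ), HasDerivWithinAt f (f' t) (Set.Ici 0) t) ∧
  ∀ s ∈ Set.Ici (0:ℝ), ∀ t ∈ Set.Ici (0:ℝ), |f' s - f' t| ≤ L * |s - t|

/-- `η ∈ E_N`: measurable noise bounded by `N` on `[0,∞)`. -/
def IsEN (N : ℝ) (η : ℝ → ℝ) : Prop :=
  Measurable η ∧ ∀ t ∈ Set.Ici (0:ℝ), |η t| ≤ N

/-- `f ∈ F_L^R`: member of `F_L` with `|f(0)| ≤ R` and `|ḟ(0)| ≤ R`. -/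
def IsFLR (L R : ℝ) (f f' : ℝ → ℝ) : Prop :=
  IsFL L f f' ∧ |f 0| ≤ R ∧ |f' 0| ≤ R

/-- A differentiator is causal if its output at time `T` depends only on the
input on `[0, T]`. -/
def Causal (D : (ℝ → ℝ) → ℝ → ℝ) : Prop :=
  ∀ u₁ u₂ T, (∀ t ∈ Set.Icc (0:ℝ) T, u₁ t = u₂ t) → D u₁ T = D u₂ T

theorem stmt12 (L : ℝ) (hL : 0 ≤ L) (u : ℝ → ℝ) (t : ℝ) (ht : 0 < t)
    (Q : ℝ → ℝ → ℝ)
    (hQ : ∀ T σ : ℝ, Q T σ = u (t - σ) - u t + ((u t - u (t - T)) / T) * σ)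
    (μ : ℝ) (hμ : μ ∈ Set.Ioc (0:ℝ) t)
    (hbound : ∀ T : ℝ, 0 < T → T ≤ μ → ∀ σ ∈ Set.Icc (0:ℝ) T,
      |Q T σ| ≤ L * σ * (T - σ) / 2) :
    ∃ β : ℝ, Filter.Tendsto (fun T => (u t - u (t - T)) / T) (𝓝[>] 0) (𝓝 β) := by
  set g : ℝ → ℝ := fun T => (u t - u (t - T)) / T with hg
  -- key estimate
  have key : ∀ σ T : ℝ, 0 < σ → σ ≤ T → T ≤ μ → |g T - g σ| ≤ L * (T - σ) / 2 := by
    intro σ T hσ hσT hTμ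
    have hT : 0 < T := lt_of_lt_of_le hσ hσT
    have hb := hbound T hT hTμ σ ⟨le_of_lt hσ, hσT⟩
    have hQval : Q T σ = σ * (g T - g σ) := by
      rw [hQ]
      have hσne : σ ≠ 0 := ne_of_gt hσ
      rw [hg]
      field_simp
      ring
    rw [hQval, abs_mul, abs_of_pos hσ] at hb
    have h2 : σ * |g T - g σ| ≤ σ * (L * (T - σ) / 2) := by
      calc σ * |g T - g σ| ≤ L * σ * (T - σ) / 2 := hb
        _ = σ * (L * (T - σ) / 2) := by ring
    exact le_of_mul_le_mul_left h2 hσ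
  -- Cauchy
  have hC : Cauchy (Filter.map g (𝓝[>] (0:ℝ))) := by
    rw [Metric.cauchy_iff]
    constructor
    · exact Filter.NeBot.map (nhdsGT_neBot 0) g
    · intro ε hε
      set δ : ℝ := min μ (ε / (L + 1)) with hδ
      have hδpos : 0 < δ := lt_min hμ.1 (div_pos hε (by linarith))
      refine ⟨g '' Set.Ioo 0 δ, ?_, ?_⟩
      · exact Filter.image_mem_map (Ioo_mem_nhdsGT_of_mem ⟨le_refl _, hδpos⟩)
      · rintro x ⟨a, ha, rfl⟩ y ⟨b, hb, rfl⟩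
        have est : ∀ p q : ℝ, 0 < p → p ≤ q → q < δ → |g q - g p| < ε := by
          intro p q hp hpq hq
          have hqμ : q ≤ μ := le_of_lt (lt_of_lt_of_le hq (min_le_left _ _))
          have h1 := key p q hp hpq hqμ
          have h2 : L * (q - p) / 2 < ε := by
            have hqε : q < ε / (L + 1) := lt_of_lt_of_le hq (min_le_right _ _)
            have h3 : L * (q - p) ≤ L * q := by nlinarith
            have h4 : L * q ≤ (L + 1) * q := by nlinarith
            have h5 : (L + 1) * q < ε := by
              have := (lt_div_iff₀ (by linarith : (0:ℝ) < L + 1)).mp hqε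
              linarith
            linarith
          linarith
        rcases le_total a b with hab | hab
        · rw [Real.dist_eq, abs_sub_comm]
          exact est a b ha.1 hab hb.2
        · rw [Real.dist_eq]
          exact est b a hb.1 hab ha.2
  obtain ⟨β, hβ⟩ := CompleteSpace.complete hC
  exact ⟨β, hβ⟩
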